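/- Sensitivity of the empirical second-moment matrix of unit-normalized data (supporting Algorithm RON-Gauss, step 4): let x⁽¹⁾, …, x⁽ⁿ⁾ ∈ ℝ^p with n ≥ 1 and ‖x⁽ⁱ⁾‖₂ ≤ 1 for all i, and let x'⁽¹⁾, …, x'⁽ⁿ⁾ be obtained by replacing exactly one vector x⁽ʲ⁾ by another vector x'⁽ʲ⁾ with ‖x'⁽ʲ⁾‖₂ ≤ 1. Then the matrices Σ = (1/n) ∑ᵢ x⁽ⁱ⁾ (x⁽ⁱ⁾)ᵀ and Σ' = (1/n) ∑ᵢ x'⁽ⁱ⁾ (x'⁽ⁱ⁾)ᵀ satisfy ‖Σ − Σ'‖_F ≤ 2/n, where ‖·‖_F denotes the Frobenius norm. -/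

import Mathlib

lemma outer_norm (p : ℕ) (a : EuclideanSpace ℝ (Fin p)) :
    Real.sqrt (∑ j, ∑ k, (a j * a k) ^ 2) = ‖a‖ ^ 2 := by
  have h : ∑ j, ∑ k, (a j * a k) ^ 2 = (∑ j, (a j) ^ 2) ^ 2 := by
    rw [sq (∑ j, (a j) ^ 2), Finset.sum_mul_sum]
    simp [mul_pow]
  rw [h, Real.sqrt_sq (by positivity)]
  have := EuclideanSpace.norm_eq a
  rw [this, Real.sq_sqrt (by positivity)]
  simp [sq_abs]

lemma diff_norm (p : ℕ) (a b : EuclideanSpace ℝ (Fin p)) :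
    Real.sqrt (∑ j, ∑ k, (a j * a k - b j * b k) ^ 2) ≤ ‖a‖ ^ 2 + ‖b‖ ^ 2 := by
  set U : EuclideanSpace ℝ (Fin p × Fin p) := WithLp.toLp 2 (fun jk : Fin p × Fin p => a jk.1 * a jk.2)
  set V : EuclideanSpace ℝ (Fin p × Fin p) := WithLp.toLp 2 (fun jk : Fin p × Fin p => b jk.1 * b jk.2)
  have hU : ‖U‖ = ‖a‖ ^ 2 := by
    rw [EuclideanSpace.norm_eq, ← outer_norm p a]
    congr 1
    rw [Fintype.sum_prod_type]
    simp [U, mul_pow, sq_abs]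
  have hV : ‖V‖ = ‖b‖ ^ 2 := by
    rw [EuclideanSpace.norm_eq, ← outer_norm p b]
    congr 1
    rw [Fintype.sum_prod_type]
    simp [V, mul_pow, sq_abs]
  have key : Real.sqrt (∑ j, ∑ k, (a j * a k - b j * b k) ^ 2) = ‖U - V‖ := by
    rw [EuclideanSpace.norm_eq]
    congr 1
    rw [Fintype.sum_prod_type]
    apply Finset.sum_congr rfl
    intro j _
    apply Finset.sum_congr rfl
    intro k _
    simp [U, V, sq_abs]
  rw [key, ← hU, ← hV]
  exact norm_sub_le U V

/-- **Sensitivity of the empirical second-moment matrix of unit-normalized data**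
(supporting RON-Gauss, step 4).  Let `x 0, …, x (n-1) ∈ ℝ^p` with `n ≥ 1` and
`‖x i‖₂ ≤ 1` for all `i`, and let `x'` be obtained by replacing exactly one vector
`x j₀` by another vector `x' j₀` with `‖x' j₀‖₂ ≤ 1`.  Then the second-moment matrices
`Σ = (1/n) ∑ i, x i (x i)ᵀ` and `Σ' = (1/n) ∑ i, x' i (x' i)ᵀ` satisfy
`‖Σ - Σ'‖_F ≤ 2 / n`, where `‖A‖_F = (∑ j k, A j k ^ 2)^(1/2)` is the Frobenius
norm. -/
theorem second_moment_replacement_sensitivity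
    {p n : ℕ} (hn : 1 ≤ n)
    (x x' : Fin n → EuclideanSpace ℝ (Fin p))
    (hx : ∀ i, ‖x i‖ ≤ 1) (hx' : ∀ i, ‖x' i‖ ≤ 1)
    (j₀ : Fin n) (hdiff : ∀ i, i ≠ j₀ → x i = x' i) :
    Real.sqrt (∑ j, ∑ k,
        ((1 / (n : ℝ)) * ∑ i, x i j * x i k
          - (1 / (n : ℝ)) * ∑ i, x' i j * x' i k) ^ 2) ≤ 2 / n := by
  have hn0 : (0:ℝ) < n := by exact_mod_cast hn
  set a := x j₀; set b := x' j₀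
  have hsum : ∀ j k : Fin p,
      (1 / (n : ℝ)) * ∑ i, x i j * x i k - (1 / (n : ℝ)) * ∑ i, x' i j * x' i k
        = (1 / (n : ℝ)) * (a j * a k - b j * b k) := by
    intro j k
    rw [← mul_sub, ← Finset.sum_sub_distrib]
    congr 1
    rw [Fintype.sum_eq_single j₀]
    intro i hi
    rw [hdiff i hi]; ring
  have hrw : (∑ j, ∑ k,
      ((1 / (n : ℝ)) * ∑ i, x i j * x i k
        - (1 / (n : ℝ)) * ∑ i, x' i j * x' i k) ^ 2)
      = (1 / (n : ℝ)) ^ 2 * ∑ j, ∑ k, (a j * a k - b j * b k) ^ 2 := by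
    rw [Finset.mul_sum]
    apply Finset.sum_congr rfl
    intro j _
    rw [Finset.mul_sum]
    apply Finset.sum_congr rfl
    intro k _
    rw [hsum j k, mul_pow]
  rw [hrw, Real.sqrt_mul (by positivity), Real.sqrt_sq (by positivity)]
  have h1 : Real.sqrt (∑ j, ∑ k, (a j * a k - b j * b k) ^ 2) ≤ 2 := by
    refine (diff_norm p a b).trans ?_
    have ha := hx j₀; have hb := hx' j₀
    nlinarith [norm_nonneg a, norm_nonneg b]
  calc (1 / (n:ℝ)) * Real.sqrt (∑ j, ∑ k, (a j * a k - b j * b k) ^ 2)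
      ≤ (1 / (n:ℝ)) * 2 := by
        apply mul_le_mul_of_nonneg_left h1 (by positivity)
    _ = 2 / n := by ring
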